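/- The maximal elements of the weak-order ideal \(X_n\) are exactly the permutations \(w_I = w_{i_1} \blacktriangleright \cdots \blacktriangleright w_{i_r}\), where \(I=(i_1,\dots,i_r)\) runs over compositions of \(n\) with no part equal to 1, \(w_i\) denotes the permutation \(1\,i\,(i-1)\cdots 2\) of \(\{1,\dots,i\}\), and \(\alpha \blacktriangleright \beta\) denotes the shifted concatenation \(\alpha[\ell]\cdot\beta\) (shift all letters of \(\alpha\) by \(\ell\) and concatenate with \(\beta \in \mathfrak{S}_\ell\)). In particular, the number of maximal elements of \(X_n\) is the number of compositions of \(n\) into parts \(\ge 2\) (a shifted Fibonacci number). -/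

import Mathlib

open Equiv

variable {n : ℕ}

/-- The one-line word of `σ` extended by the sentinel `0`. -/
def word (σ : Perm (Fin n)) (i : ℕ) : ℕ :=
  if h : i < n then ((σ ⟨i, h⟩ : ℕ) + 1) else 0

/-- Position `i` of `σ·0` is a left-to-right minimum. -/
def IsLRMin (σ : Perm (Fin n)) (i : ℕ) : Prop :=
  ∀ j < i, word σ i < word σ j

/-- `X_n`: permutations whose word `σ·0` has no two adjacent left-to-right minima. -/
def Xset (n : ℕ) : Set (Perm (Fin n)) :=
  {σ | ¬ ∃ i : ℕ, i + 1 ≤ n ∧ IsLRMin σ i ∧ IsLRMin σ (i + 1)}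

/-- The number of inversions of `σ`. -/
noncomputable def invCount (σ : Perm (Fin n)) : ℕ :=
  Nat.card {p : Fin n × Fin n // p.1 < p.2 ∧ σ p.2 < σ p.1}

/-- Covering relation of the left weak order. -/
def WeakCover (σ τ : Perm (Fin n)) : Prop :=
  ∃ (i : ℕ) (h : i + 1 < n),
    τ = Equiv.swap (⟨i, Nat.lt_of_succ_lt h⟩ : Fin n) ⟨i + 1, h⟩ * σ ∧
    invCount τ = invCount σ + 1

/-- The left weak order on `𝔖_n`. -/
def WeakLe (π σ : Perm (Fin n)) : Prop := Relation.ReflTransGen WeakCover π σ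

/-- The (0-indexed) value at position `p` of the left-shifted concatenation
`w_I = w_{i_1} ▶ ⋯ ▶ w_{i_r}` associated with the composition `I = c` of `n`, where
`w_i = 1 i (i-1) ⋯ 2`: within the `b`-th block (of length `m`, starting at position
`s = sizeUpTo b`, with value offset `t = n - sizeUpTo (b+1)`), the word is
`(1+t) (m+t) (m-1+t) ⋯ (2+t)` (written 1-indexed). -/
def wIval (c : Composition n) (p : Fin n) : ℕ :=
  let b := c.index p
  let j := (p : ℕ) - c.sizeUpTo b
  (n - c.sizeUpTo ((b : ℕ) + 1)) + (if j = 0 then 0 else c.blocksFun b - j)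

/-- A maximal element of `X_n` for the left weak order. -/
def IsMaxX (n : ℕ) (σ : Perm (Fin n)) : Prop :=
  σ ∈ Xset n ∧ ∀ τ ∈ Xset n, WeakLe σ τ → τ = σ


/-! ### Basic lemmas -/

lemma word_lt (σ : Perm (Fin n)) {i : ℕ} (h : i < n) : word σ i = (σ ⟨i, h⟩ : ℕ) + 1 :=
  dif_pos h

lemma word_fin (σ : Perm (Fin n)) (q : Fin n) : word σ q = (σ q : ℕ) + 1 := by
  rw [word_lt σ q.2]

lemma word_ge (σ : Perm (Fin n)) {i : ℕ} (h : n ≤ i) : word σ i = 0 :=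
  dif_neg (by omega)

lemma isLRMin_iff (σ : Perm (Fin n)) {p : ℕ} (hp : p < n) :
    IsLRMin σ p ↔ ∀ q : Fin n, (q : ℕ) < p → (σ ⟨p, hp⟩ : ℕ) < σ q := by
  constructor
  · intro H q hq
    have := H q hq
    rwa [word_lt σ hp, word_fin, Nat.add_lt_add_iff_right] at this
  · intro H j hj
    have hjn : j < n := hj.trans hp
    rw [word_lt σ hp, word_lt σ hjn, Nat.add_lt_add_iff_right]
    exact H ⟨j, hjn⟩ hj

lemma isLRMin_ge (σ : Perm (Fin n)) {i : ℕ} (h : n ≤ i) :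
    IsLRMin σ i ↔ i = n ∨ i = 0 := by
  constructor
  · intro H
    by_contra hc
    push_neg at hc
    have hn : n < i := lt_of_le_of_ne h (Ne.symm hc.1)
    have := H n hn
    rw [word_ge σ h, word_ge σ le_rfl] at this
    omega
  · rintro (rfl | rfl)
    · intro j hj
      rw [word_ge σ le_rfl, word_lt σ hj]
      omega
    · intro j hj; omega

lemma isLRMin_top (σ : Perm (Fin n)) : IsLRMin σ n :=
  (isLRMin_ge σ le_rfl).2 (Or.inl rfl)

lemma isLRMin_zero (σ : Perm (Fin n)) : IsLRMin σ 0 := fun j hj => by omega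

lemma mem_Xset_iff (σ : Perm (Fin n)) :
    σ ∈ Xset n ↔ ∀ i : ℕ, i + 1 ≤ n → ¬ (IsLRMin σ i ∧ IsLRMin σ (i + 1)) := by
  simp only [Xset, Set.mem_setOf_eq, not_exists]
  constructor
  · intro h i hi; exact fun hh => h i ⟨hi, hh⟩
  · intro h i ⟨hi, hh⟩; exact h i hi hh

lemma val_eq_symm (σ : Perm (Fin n)) (p z : Fin n) :
    (σ p : ℕ) = z ↔ (p : ℕ) = σ.symm z := by
  rw [Fin.val_eq_val, Fin.val_eq_val]
  exact Equiv.apply_eq_iff_eq_symm_apply σ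

/-! ### Swap machinery -/

lemma swap_val (x y s : Fin n) :
    ((Equiv.swap x y s : Fin n) : ℕ) =
      if (s : ℕ) = x then (y : ℕ) else if (s : ℕ) = y then (x : ℕ) else (s : ℕ) := by
  rw [Equiv.swap_apply_def]
  split_ifs with h1 h2 h3 h4 h5 <;> simp_all [Fin.ext_iff]

lemma swap_val_lt_iff {x y s t : Fin n} (hxy : (x : ℕ) + 1 = (y : ℕ))
    (h1 : ¬((s : ℕ) = x ∧ (t : ℕ) = y)) (h2 : ¬((s : ℕ) = y ∧ (t : ℕ) = x)) :
    ((Equiv.swap x y s : Fin n) : ℕ) < ((Equiv.swap x y t : Fin n) : ℕ) ↔ (s : ℕ) < (t : ℕ) := by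
  rw [swap_val, swap_val]
  split_ifs <;> omega

lemma tau_apply (σ : Perm (Fin n)) (x y : Fin n) (p : Fin n) :
    (Equiv.swap x y * σ) p = Equiv.swap x y (σ p) := rfl

section SwapFacts

variable {σ : Perm (Fin n)} {x y : Fin n} (hxy : (x : ℕ) + 1 = (y : ℕ))
  (hab : (σ.symm x : ℕ) < (σ.symm y : ℕ))

include hxy hab in
lemma lrmin_swap_iff {i : ℕ} (hi : i ≠ (σ.symm y : ℕ)) :
    IsLRMin (Equiv.swap x y * σ) i ↔ IsLRMin σ i := by
  rcases lt_or_ge i n with hin | hin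
  · rw [isLRMin_iff _ hin, isLRMin_iff _ hin]
    apply forall_congr'
    intro q
    apply imp_congr_right
    intro hq
    rw [tau_apply, tau_apply]
    apply swap_val_lt_iff hxy
    · rintro ⟨hs, ht⟩
      rw [val_eq_symm] at hs ht
      have hs' : i = (σ.symm x : ℕ) := hs
      omega
    · rintro ⟨hs, ht⟩
      rw [val_eq_symm] at hs
      exact hi hs
  · rw [isLRMin_ge _ hin, isLRMin_ge _ hin]

include hxy in
lemma lrmin_swap_b :
    IsLRMin (Equiv.swap x y * σ) (σ.symm y) ↔
      ∀ q : Fin n, (q : ℕ) < (σ.symm y : ℕ) → q ≠ σ.symm x → (x : ℕ) < σ q := by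
  rw [isLRMin_iff _ (σ.symm y).2]
  have hb : (Equiv.swap x y * σ) ⟨(σ.symm y : ℕ), (σ.symm y).2⟩ = x := by
    rw [tau_apply]
    simp [Fin.eta]
  rw [hb]
  constructor
  · intro H q hq hqa
    have := H q hq
    rw [tau_apply] at this
    rwa [Equiv.swap_apply_of_ne_of_ne] at this
    · intro h; apply hqa; rw [← Equiv.symm_apply_apply σ q, h]
    · intro h
      have : (q : ℕ) = σ.symm y := by rw [← h]; simp
      omega
  · intro H q hq
    rw [tau_apply]
    rcases eq_or_ne q (σ.symm x) with rfl | hqa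
    · rw [Equiv.apply_symm_apply, Equiv.swap_apply_left]
      omega
    · rw [Equiv.swap_apply_of_ne_of_ne]
      · exact H q hq hqa
      · intro h; apply hqa; rw [← Equiv.symm_apply_apply σ q, h]
      · intro h
        have : (q : ℕ) = σ.symm y := by rw [← h]; simp
        omega

include hxy hab in
lemma not_lrmin_b : ¬ IsLRMin σ (σ.symm y) := by
  rw [isLRMin_iff _ (σ.symm y).2]
  push_neg
  refine ⟨σ.symm x, hab, ?_⟩
  simp only [Fin.eta, Equiv.apply_symm_apply]
  omega

include hxy hab in
lemma lrmin_swap_mono {i : ℕ} (h : IsLRMin σ i) : IsLRMin (Equiv.swap x y * σ) i := by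
  rcases eq_or_ne i ((σ.symm y : ℕ)) with rfl | hi
  · exact absurd h (not_lrmin_b hxy hab)
  · exact (lrmin_swap_iff hxy hab hi).2 h

lemma invCount_eq_ncard (σ : Perm (Fin n)) :
    invCount σ = {p : Fin n × Fin n | p.1 < p.2 ∧ σ p.2 < σ p.1}.ncard := by
  rw [← Nat.card_coe_set_eq]
  rfl

include hxy hab in
lemma invCount_swap : invCount (Equiv.swap x y * σ) = invCount σ + 1 := by
  rw [invCount_eq_ncard, invCount_eq_ncard]
  have hset : {p : Fin n × Fin n | p.1 < p.2 ∧ (Equiv.swap x y * σ) p.2 < (Equiv.swap x y * σ) p.1}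
      = insert (σ.symm x, σ.symm y) {p : Fin n × Fin n | p.1 < p.2 ∧ σ p.2 < σ p.1} := by
    ext ⟨p, q⟩
    simp only [Set.mem_setOf_eq, Set.mem_insert_iff, Prod.mk.injEq, Fin.lt_def]
    constructor
    · rintro ⟨hpq, hlt⟩
      by_cases hc : p = σ.symm x ∧ q = σ.symm y
      · exact Or.inl hc
      · refine Or.inr ⟨hpq, ?_⟩
        rw [tau_apply, tau_apply] at hlt
        rw [← swap_val_lt_iff hxy (s := σ q) (t := σ p)]
        · exact hlt
        · rintro ⟨h1, h2⟩
          rw [val_eq_symm] at h1 h2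
          omega
        · rintro ⟨h1, h2⟩
          apply hc
          rw [val_eq_symm] at h1 h2
          exact ⟨Fin.ext h2, Fin.ext h1⟩
    · rintro (⟨rfl, rfl⟩ | ⟨hpq, hlt⟩)
      · refine ⟨hab, ?_⟩
        rw [tau_apply, tau_apply, Equiv.apply_symm_apply, Equiv.apply_symm_apply,
          Equiv.swap_apply_left, Equiv.swap_apply_right]
        omega
      · refine ⟨hpq, ?_⟩
        rw [tau_apply, tau_apply]
        rw [swap_val_lt_iff hxy (s := σ q) (t := σ p)]
        · exact hlt
        · rintro ⟨h1, h2⟩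
          rw [val_eq_symm] at h1 h2
          omega
        · rintro ⟨h1, h2⟩
          omega
  rw [hset, Set.ncard_insert_of_notMem _ (Set.toFinite _)]
  simp only [Set.mem_setOf_eq, Fin.lt_def, Equiv.apply_symm_apply]
  rintro ⟨-, h⟩
  omega

end SwapFacts

/-! ### Covers and maximality criterion -/

lemma weakCover_iff {σ τ : Perm (Fin n)} :
    WeakCover σ τ ↔ ∃ (v : ℕ) (hv : v + 1 < n),
      τ = Equiv.swap (⟨v, Nat.lt_of_succ_lt hv⟩ : Fin n) ⟨v + 1, hv⟩ * σ ∧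
      (σ.symm ⟨v, Nat.lt_of_succ_lt hv⟩ : ℕ) < (σ.symm ⟨v + 1, hv⟩ : ℕ) := by
  constructor
  · rintro ⟨v, hv, rfl, hinv⟩
    refine ⟨v, hv, rfl, ?_⟩
    set x : Fin n := ⟨v, Nat.lt_of_succ_lt hv⟩ with hxdef
    set y : Fin n := ⟨v + 1, hv⟩ with hydef
    have hxy : (x : ℕ) + 1 = (y : ℕ) := rfl
    rcases lt_trichotomy ((σ.symm x : ℕ)) ((σ.symm y : ℕ)) with h | h | h
    · exact h
    · exfalso
      have h2 : x = y := σ.symm.injective (Fin.ext h)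
      have := congrArg Fin.val h2
      simp [hxdef, hydef] at this
    · exfalso
      set τ := Equiv.swap x y * σ with hτ
      have h1 : τ.symm x = σ.symm y := by
        have hh : τ (σ.symm y) = x := by
          rw [hτ, Equiv.Perm.mul_apply, Equiv.apply_symm_apply, Equiv.swap_apply_right]
        rw [← hh, Equiv.symm_apply_apply]
      have h2 : τ.symm y = σ.symm x := by
        have hh : τ (σ.symm x) = y := by
          rw [hτ, Equiv.Perm.mul_apply, Equiv.apply_symm_apply, Equiv.swap_apply_left]
        rw [← hh, Equiv.symm_apply_apply]
      have habτ : (τ.symm x : ℕ) < (τ.symm y : ℕ) := by rw [h1, h2]; exact h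
      have hswap := invCount_swap (σ := τ) hxy habτ
      have hid : Equiv.swap x y * τ = σ := by
        rw [hτ, ← mul_assoc, Equiv.swap_mul_self, one_mul]
      rw [hid] at hswap
      omega
  · rintro ⟨v, hv, rfl, hab⟩
    exact ⟨v, hv, rfl, invCount_swap rfl hab⟩

lemma xset_of_cover {π ρ : Perm (Fin n)} (h : WeakCover π ρ) (hρ : ρ ∈ Xset n) : π ∈ Xset n := by
  rw [weakCover_iff] at h
  obtain ⟨v, hv, rfl, hab⟩ := h
  rw [mem_Xset_iff] at hρ ⊢
  intro i hi hmin
  exact hρ i hi ⟨lrmin_swap_mono rfl hab hmin.1, lrmin_swap_mono rfl hab hmin.2⟩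

lemma xset_of_le {π ρ : Perm (Fin n)} (h : WeakLe π ρ) : ρ ∈ Xset n → π ∈ Xset n := by
  induction h with
  | refl => exact id
  | tail _ hcov ih => exact fun hρ => ih (xset_of_cover hcov hρ)

lemma isMaxX_iff' (σ : Perm (Fin n)) :
    IsMaxX n σ ↔ σ ∈ Xset n ∧ ∀ (v : ℕ) (hv : v + 1 < n),
      (σ.symm ⟨v, Nat.lt_of_succ_lt hv⟩ : ℕ) < (σ.symm ⟨v + 1, hv⟩ : ℕ) →
      (Equiv.swap (⟨v, Nat.lt_of_succ_lt hv⟩ : Fin n) ⟨v + 1, hv⟩ * σ) ∉ Xset n := by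
  constructor
  · rintro ⟨hX, hmax⟩
    refine ⟨hX, fun v hv hab hmem => ?_⟩
    have hcov : WeakCover σ (Equiv.swap (⟨v, Nat.lt_of_succ_lt hv⟩ : Fin n) ⟨v + 1, hv⟩ * σ) :=
      weakCover_iff.2 ⟨v, hv, rfl, hab⟩
    have heq := hmax _ hmem (Relation.ReflTransGen.single hcov)
    have hinv := invCount_swap (σ := σ) (x := ⟨v, Nat.lt_of_succ_lt hv⟩) (y := ⟨v + 1, hv⟩)
      rfl hab
    rw [heq] at hinv
    omega
  · rintro ⟨hX, hdead⟩
    refine ⟨hX, fun τ hτ hle => ?_⟩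
    rcases Relation.ReflTransGen.cases_head hle with rfl | ⟨ρ, hcov, hle'⟩
    · rfl
    · exfalso
      have hρ : ρ ∈ Xset n := xset_of_le hle' hτ
      rw [weakCover_iff] at hcov
      obtain ⟨v, hv, rfl, hab⟩ := hcov
      exact hdead v hv hab hρ

lemma maximal_ascent {σ : Perm (Fin n)} (hmax : IsMaxX n σ) (v : ℕ) (hv : v + 1 < n)
    (hab : (σ.symm ⟨v, Nat.lt_of_succ_lt hv⟩ : ℕ) < (σ.symm ⟨v + 1, hv⟩ : ℕ)) :
    ∀ q : Fin n, (q : ℕ) < (σ.symm ⟨v + 1, hv⟩ : ℕ) → q ≠ σ.symm ⟨v, Nat.lt_of_succ_lt hv⟩ →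
      v < (σ q : ℕ) := by
  obtain ⟨hX, hdead⟩ := (isMaxX_iff' σ).1 hmax
  have hnot := hdead v hv hab
  set x : Fin n := ⟨v, Nat.lt_of_succ_lt hv⟩ with hxdef
  set y : Fin n := ⟨v + 1, hv⟩ with hydef
  simp only [Xset, Set.mem_setOf_eq, not_not] at hnot
  obtain ⟨i, hi, hm1, hm2⟩ := hnot
  have hb : (σ.symm y : ℕ) = i ∨ (σ.symm y : ℕ) = i + 1 := by
    by_contra hc
    push_neg at hc
    exact (mem_Xset_iff σ).1 hX i hi
      ⟨(lrmin_swap_iff rfl hab (Ne.symm hc.1)).1 hm1,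
       (lrmin_swap_iff rfl hab (Ne.symm hc.2)).1 hm2⟩
  have hmb : IsLRMin (Equiv.swap x y * σ) ((σ.symm y : ℕ)) := by
    rcases hb with h | h <;> rw [h] <;> assumption
  exact (lrmin_swap_b (σ := σ) rfl).1 hmb

/-! ### Composition helper lemmas -/

lemma index_unique (c : Composition n) {p : Fin n} {b : Fin c.length}
    (h1 : c.sizeUpTo (b : ℕ) ≤ (p : ℕ)) (h2 : (p : ℕ) < c.sizeUpTo ((b : ℕ) + 1)) :
    c.index p = b := by
  have ha := c.sizeUpTo_index_le p
  have hb := c.lt_sizeUpTo_index_succ p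
  rw [Fin.val_succ] at hb
  by_contra hne
  rcases lt_or_gt_of_ne (fun h => hne (Fin.ext h) : (c.index p : ℕ) ≠ (b : ℕ)) with h | h
  · have : c.sizeUpTo ((c.index p : ℕ) + 1) ≤ c.sizeUpTo (b : ℕ) :=
      c.monotone_sizeUpTo (by omega)
    omega
  · have : c.sizeUpTo ((b : ℕ) + 1) ≤ c.sizeUpTo (c.index p : ℕ) :=
      c.monotone_sizeUpTo (by omega)
    omega

lemma sizeUpTo_lt_of_lt_length (c : Composition n) {e : ℕ} (h : e < c.length) :
    c.sizeUpTo e < n := by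
  have h1 := c.sizeUpTo_strict_mono h
  have h2 := c.sizeUpTo_le (e + 1)
  omega

lemma lt_length_of_sizeUpTo_lt (c : Composition n) {e : ℕ} (h : c.sizeUpTo e < n) :
    e < c.length := by
  by_contra hc
  rw [c.sizeUpTo_ofLength_le e (by omega)] at h
  omega

lemma sizeUpTo_index_succ_eq (c : Composition n) (p : Fin n) :
    c.sizeUpTo ((c.index p : ℕ) + 1) = c.sizeUpTo (c.index p : ℕ) + c.blocksFun (c.index p) :=
  c.sizeUpTo_succ (c.index p).2

/-! ### Values of `wIval` -/

lemma wIval_start (c : Composition n) {p : Fin n} (h : (p : ℕ) = c.sizeUpTo (c.index p : ℕ)) :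
    wIval c p = n - c.sizeUpTo ((c.index p : ℕ) + 1) := by
  show (n - c.sizeUpTo ((c.index p : ℕ) + 1)) +
    (if (p : ℕ) - c.sizeUpTo (c.index p : ℕ) = 0 then 0
      else c.blocksFun (c.index p) - ((p : ℕ) - c.sizeUpTo (c.index p : ℕ))) = _
  rw [if_pos (by omega)]
  omega

lemma wIval_nonstart (c : Composition n) {p : Fin n} (h : (p : ℕ) ≠ c.sizeUpTo (c.index p : ℕ)) :
    wIval c p = n - (p : ℕ) := by
  have h1 := c.sizeUpTo_index_le p
  have h2 := c.lt_sizeUpTo_index_succ p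
  rw [Fin.val_succ] at h2
  have h3 := c.sizeUpTo_le ((c.index p : ℕ) + 1)
  have h4 := sizeUpTo_index_succ_eq c p
  show (n - c.sizeUpTo ((c.index p : ℕ) + 1)) +
    (if (p : ℕ) - c.sizeUpTo (c.index p : ℕ) = 0 then 0
      else c.blocksFun (c.index p) - ((p : ℕ) - c.sizeUpTo (c.index p : ℕ))) = _
  rw [if_neg (by omega)]
  omega

lemma wIval_lt (c : Composition n) (p : Fin n) : wIval c p < n := by
  have h1 := c.sizeUpTo_index_le p
  have h2 := c.lt_sizeUpTo_index_succ p
  rw [Fin.val_succ] at h2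
  have h3 := c.sizeUpTo_le ((c.index p : ℕ) + 1)
  by_cases h : (p : ℕ) = c.sizeUpTo (c.index p : ℕ)
  · rw [wIval_start c h]; omega
  · rw [wIval_nonstart c h]
    have := p.2
    omega

lemma wIval_lower (c : Composition n) (p : Fin n) :
    n - c.sizeUpTo ((c.index p : ℕ) + 1) ≤ wIval c p :=
  Nat.le_add_right _ _

lemma wIval_upper (c : Composition n) (p : Fin n) :
    wIval c p < n - c.sizeUpTo (c.index p : ℕ) := by
  have h1 := c.sizeUpTo_index_le p
  have h2 := c.lt_sizeUpTo_index_succ p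
  rw [Fin.val_succ] at h2
  have h3 := c.sizeUpTo_le ((c.index p : ℕ) + 1)
  have h5 := p.2
  by_cases h : (p : ℕ) = c.sizeUpTo (c.index p : ℕ)
  · rw [wIval_start c h]
    have h4 := c.sizeUpTo_succ (c.index p).2
    have h6 := c.one_le_blocksFun (c.index p)
    omega
  · rw [wIval_nonstart c h]
    omega

lemma wIval_inj (c : Composition n) {p q : Fin n} (h : wIval c p = wIval c q) : p = q := by
  -- first, indices agree
  have hidx : (c.index p : ℕ) = (c.index q : ℕ) := by
    by_contra hne
    rcases lt_or_gt_of_ne hne with hlt | hlt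
    · have h1 : c.sizeUpTo ((c.index p : ℕ) + 1) ≤ c.sizeUpTo (c.index q : ℕ) :=
        c.monotone_sizeUpTo (by omega)
      have h2 := wIval_lower c p
      have h3 := wIval_upper c q
      omega
    · have h1 : c.sizeUpTo ((c.index q : ℕ) + 1) ≤ c.sizeUpTo (c.index p : ℕ) :=
        c.monotone_sizeUpTo (by omega)
      have h2 := wIval_lower c q
      have h3 := wIval_upper c p
      omega
  have hp1 := c.sizeUpTo_index_le p
  have hp2 := c.lt_sizeUpTo_index_succ p
  rw [Fin.val_succ] at hp2
  have hq1 := c.sizeUpTo_index_le q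
  have hq2 := c.lt_sizeUpTo_index_succ q
  rw [Fin.val_succ] at hq2
  have h3 := c.sizeUpTo_le ((c.index p : ℕ) + 1)
  have hpn := p.2
  have hqn := q.2
  rw [hidx] at hp1 hp2 h3
  by_cases hsp : (p : ℕ) = c.sizeUpTo (c.index p : ℕ) <;>
    by_cases hsq : (q : ℕ) = c.sizeUpTo (c.index q : ℕ)
  · apply Fin.ext; rw [hsp, hsq, hidx]
  · rw [wIval_start c hsp, wIval_nonstart c hsq] at h
    rw [hidx] at h
    apply Fin.ext
    omega
  · rw [wIval_nonstart c hsp, wIval_start c hsq] at h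
    apply Fin.ext
    omega
  · rw [wIval_nonstart c hsp, wIval_nonstart c hsq] at h
    apply Fin.ext
    omega

/-! ### Permutations with `wIval` values: minima, membership in `X`, maximality -/

section Alpha

variable {c : Composition n} {σ : Perm (Fin n)} (hσ : ∀ p : Fin n, (σ p : ℕ) = wIval c p)

include hσ in
lemma lrmin_wIval (p : Fin n) :
    IsLRMin σ (p : ℕ) ↔ (p : ℕ) = c.sizeUpTo (c.index p : ℕ) := by
  rw [isLRMin_iff σ p.2]
  constructor
  · intro H
    by_contra hns
    have hsn : c.sizeUpTo (c.index p : ℕ) < n := lt_of_le_of_lt (c.sizeUpTo_index_le p) p.2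
    set q : Fin n := ⟨c.sizeUpTo (c.index p : ℕ), hsn⟩ with hq
    have hqp : (q : ℕ) < (p : ℕ) := lt_of_le_of_ne (c.sizeUpTo_index_le p) (fun h => hns h.symm)
    have hiq : c.index q = c.index p := by
      apply index_unique
      · exact le_rfl
      · have := c.lt_sizeUpTo_index_succ p
        rw [Fin.val_succ] at this
        have := c.sizeUpTo_index_le p
        calc (q : ℕ) ≤ (p : ℕ) := le_of_lt hqp
        _ < c.sizeUpTo ((c.index p : ℕ) + 1) := by
            have := c.lt_sizeUpTo_index_succ p
            rwa [Fin.val_succ] at this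
    have hval : wIval c q = n - c.sizeUpTo ((c.index p : ℕ) + 1) := by
      rw [wIval_start c (by rw [hiq])]
      rw [hiq]
    have hp2 := c.lt_sizeUpTo_index_succ p
    rw [Fin.val_succ] at hp2
    have h3 := c.sizeUpTo_le ((c.index p : ℕ) + 1)
    have hvp : wIval c p = n - (p : ℕ) := wIval_nonstart c hns
    have := H q hqp
    rw [Fin.eta, hσ, hσ, hval, hvp] at this
    have hpn := p.2
    omega
  · intro hstart q hqp
    rw [Fin.eta, hσ, hσ]
    have hq1 := c.sizeUpTo_index_le q
    have hq2 := c.lt_sizeUpTo_index_succ q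
    rw [Fin.val_succ] at hq2
    have hbq : (c.index q : ℕ) < (c.index p : ℕ) := by
      by_contra hc
      have : c.sizeUpTo (c.index p : ℕ) ≤ c.sizeUpTo (c.index q : ℕ) :=
        c.monotone_sizeUpTo (by omega)
      omega
    have h1 : c.sizeUpTo ((c.index q : ℕ) + 1) ≤ c.sizeUpTo (c.index p : ℕ) :=
      c.monotone_sizeUpTo (by omega)
    have h2 := wIval_lower c q
    have hvp : wIval c p = n - c.sizeUpTo ((c.index p : ℕ) + 1) := wIval_start c hstart
    have hp2 := c.lt_sizeUpTo_index_succ p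
    rw [Fin.val_succ] at hp2
    have h3 := c.sizeUpTo_le ((c.index p : ℕ) + 1)
    omega

include hσ in
lemma lrmin_wIval' {i : ℕ} (hi : i < n) :
    IsLRMin σ i ↔ i = c.sizeUpTo (c.index ⟨i, hi⟩ : ℕ) :=
  lrmin_wIval hσ ⟨i, hi⟩

include hσ in
lemma xmem_wIval (h2 : ∀ i ∈ c.blocks, 2 ≤ i) : σ ∈ Xset n := by
  rw [mem_Xset_iff]
  rintro i hi ⟨hm1, hm2⟩
  have hin : i < n := by omega
  rw [lrmin_wIval' hσ hin] at hm1
  have hbl : 2 ≤ c.blocksFun (c.index ⟨i, hin⟩) :=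
    h2 _ (c.blocksFun_mem_blocks _)
  have hsucc := sizeUpTo_index_succ_eq c ⟨i, hin⟩
  have h3 := c.sizeUpTo_le ((c.index ⟨i, hin⟩ : ℕ) + 1)
  rcases eq_or_lt_of_le hi with heq | hlt
  · omega
  · rw [lrmin_wIval' hσ hlt] at hm2
    have hiq : c.index ⟨i + 1, hlt⟩ = c.index ⟨i, hin⟩ := by
      apply index_unique
      · simp only []
        omega
      · simp only []
        omega
    rw [hiq] at hm2
    omega

include hσ in
lemma maxX_wIval (h2 : ∀ i ∈ c.blocks, 2 ≤ i) : IsMaxX n σ := by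
  rw [isMaxX_iff']
  refine ⟨xmem_wIval hσ h2, ?_⟩
  intro v hv hab hmem
  set x : Fin n := ⟨v, Nat.lt_of_succ_lt hv⟩ with hxdef
  set y : Fin n := ⟨v + 1, hv⟩ with hydef
  set a : Fin n := σ.symm x with hadef
  set b : Fin n := σ.symm y with hbdef
  have hva : wIval c a = v := by rw [← hσ, hadef, Equiv.apply_symm_apply]
  have hvb : wIval c b = v + 1 := by rw [← hσ, hbdef, Equiv.apply_symm_apply]
  set e := c.index a with hedef
  have ha1 := c.sizeUpTo_index_le a
  have ha2 := c.lt_sizeUpTo_index_succ a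
  rw [Fin.val_succ] at ha2
  have hb1 := c.sizeUpTo_index_le b
  have hb2 := c.lt_sizeUpTo_index_succ b
  rw [Fin.val_succ] at hb2
  have hSe := c.sizeUpTo_le ((e : ℕ) + 1)
  have han := a.2
  have hbn := b.2
  -- step 1 : a is the start of its block
  have hastart : (a : ℕ) = c.sizeUpTo (e : ℕ) := by
    by_contra hans
    have hva' : wIval c a = n - (a : ℕ) := wIval_nonstart c hans
    by_cases hbs : (b : ℕ) = c.sizeUpTo (c.index b : ℕ)
    · have hvb' := wIval_start c hbs
      have hSf := c.sizeUpTo_le ((c.index b : ℕ) + 1)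
      omega
    · have hvb' := wIval_nonstart c hbs
      omega
  have hblk : 2 ≤ c.blocksFun e := h2 _ (c.blocksFun_mem_blocks _)
  have hsucc := sizeUpTo_index_succ_eq c a
  rw [← hedef] at hsucc
  have hveq : v = n - c.sizeUpTo ((e : ℕ) + 1) := by
    rw [← hva, wIval_start c (by rw [← hedef]; exact hastart)]
  -- b is not a block start, and lies at the end of block e
  have hbval : (b : ℕ) = c.sizeUpTo ((e : ℕ) + 1) - 1 := by
    by_cases hbs : (b : ℕ) = c.sizeUpTo (c.index b : ℕ)
    · exfalso
      have hvb' := wIval_start c hbs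
      have hSf := c.sizeUpTo_le ((c.index b : ℕ) + 1)
      have hf1 : c.sizeUpTo ((c.index b : ℕ) + 1) = c.sizeUpTo ((e : ℕ) + 1) - 1 := by omega
      have hef : (e : ℕ) < (c.index b : ℕ) := by
        by_contra hc
        have : c.sizeUpTo (c.index b : ℕ) ≤ c.sizeUpTo (e : ℕ) := c.monotone_sizeUpTo (by omega)
        omega
      have : c.sizeUpTo ((e : ℕ) + 1) ≤ c.sizeUpTo (c.index b : ℕ) := c.monotone_sizeUpTo (by omega)
      omega
    · have hvb' := wIval_nonstart c hbs
      omega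
  -- adjacent minima of τ at b and b+1
  have hminb1 : IsLRMin (Equiv.swap x y * σ) ((b : ℕ) + 1) := by
    have hb1n : (b : ℕ) + 1 = c.sizeUpTo ((e : ℕ) + 1) := by omega
    rcases eq_or_lt_of_le hSe with heq | hlt
    · rw [hb1n, heq]
      exact isLRMin_top _
    · have hlen : (e : ℕ) + 1 < c.length := lt_length_of_sizeUpTo_lt c (by omega)
      have hmins : IsLRMin σ ((b : ℕ) + 1) := by
        rw [lrmin_wIval' hσ (by omega)]
        have : c.index ⟨(b : ℕ) + 1, by omega⟩ = ⟨(e : ℕ) + 1, hlen⟩ := by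
          apply index_unique
          · simp only []
            omega
          · simp only []
            have := c.sizeUpTo_strict_mono hlen
            omega
        rw [this]
        simp only []
        omega
      rw [lrmin_swap_iff rfl hab (by rw [← hbdef]; omega : (b:ℕ)+1 ≠ ((σ.symm y : Fin n) : ℕ))]
      exact hmins
  have hminb : IsLRMin (Equiv.swap x y * σ) ((σ.symm y : Fin n) : ℕ) := by
    rw [lrmin_swap_b rfl]
    intro q hq hqa
    rw [← hbdef] at hq
    rw [← hadef] at hqa
    rw [hσ]
    have hxv : (x : ℕ) = v := rfl
    have hq1 := c.sizeUpTo_index_le q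
    have hq2 := c.lt_sizeUpTo_index_succ q
    rw [Fin.val_succ] at hq2
    have hqn := q.2
    by_cases hge : (c.index q : ℕ) = (e : ℕ)
    · -- same block, q ≠ a so q is not the start
      have hqs : (q : ℕ) ≠ c.sizeUpTo (c.index q : ℕ) := by
        rw [hge]
        intro hcon
        exact hqa (Fin.ext (by omega))
      have := wIval_nonstart c hqs
      omega
    · have hlt : (c.index q : ℕ) < (e : ℕ) := by
        by_contra hc
        have : c.sizeUpTo ((e : ℕ) + 1) ≤ c.sizeUpTo (c.index q : ℕ) :=
          c.monotone_sizeUpTo (by omega)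
        omega
      have h1 : c.sizeUpTo ((c.index q : ℕ) + 1) ≤ c.sizeUpTo (e : ℕ) :=
        c.monotone_sizeUpTo (by omega)
      have h2' := wIval_lower c q
      have := c.sizeUpTo_strict_mono e.2
      omega
  rw [mem_Xset_iff] at hmem
  exact hmem (b : ℕ) (by omega) ⟨hminb, hminb1⟩

end Alpha

/-! ### The set of LR minima, and the composition attached to a permutation -/

open Classical in
noncomputable def minSet (σ : Perm (Fin n)) : Finset ℕ :=
  ((Finset.range n).filter fun i => IsLRMin σ i) ∪ {n}

lemma mem_minSet {σ : Perm (Fin n)} {i : ℕ} :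
    i ∈ minSet σ ↔ (i < n ∧ IsLRMin σ i) ∨ i = n := by
  simp only [minSet, Finset.mem_union, Finset.mem_filter, Finset.mem_range,
    Finset.mem_singleton]

lemma n_mem_minSet (σ : Perm (Fin n)) : n ∈ minSet σ := mem_minSet.2 (Or.inr rfl)

lemma zero_mem_minSet (σ : Perm (Fin n)) : 0 ∈ minSet σ := by
  rcases Nat.eq_zero_or_pos n with h | h
  · exact mem_minSet.2 (Or.inr h.symm)
  · exact mem_minSet.2 (Or.inl ⟨h, isLRMin_zero σ⟩)

lemma minSet_le_n {σ : Perm (Fin n)} {i : ℕ} (h : i ∈ minSet σ) : i ≤ n := by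
  rcases mem_minSet.1 h with ⟨h1, -⟩ | rfl
  · omega
  · exact le_rfl

lemma minSet_lrmin {σ : Perm (Fin n)} {i : ℕ} (h : i ∈ minSet σ) : IsLRMin σ i := by
  rcases mem_minSet.1 h with ⟨-, h2⟩ | rfl
  · exact h2
  · exact isLRMin_top σ

noncomputable def nxt (σ : Perm (Fin n)) (p : ℕ) : ℕ :=
  sInf {i | i ∈ minSet σ ∧ p < i}

lemma nxt_spec (σ : Perm (Fin n)) {p : ℕ} (hp : p < n) :
    nxt σ p ∈ minSet σ ∧ p < nxt σ p :=
  Nat.sInf_mem (⟨n, n_mem_minSet σ, hp⟩ : {i | i ∈ minSet σ ∧ p < i}.Nonempty)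

lemma nxt_le (σ : Perm (Fin n)) {p i : ℕ} (h : i ∈ minSet σ) (hpi : p < i) :
    nxt σ p ≤ i :=
  Nat.sInf_le ⟨h, hpi⟩

lemma nxt_le_n (σ : Perm (Fin n)) {p : ℕ} (hp : p < n) : nxt σ p ≤ n :=
  nxt_le σ (n_mem_minSet σ) hp

lemma nxt_gap {σ : Perm (Fin n)} (hX : σ ∈ Xset n) {p : ℕ} (hp : p ∈ minSet σ)
    (hpn : p < n) : p + 2 ≤ nxt σ p := by
  have h1 := nxt_spec σ hpn
  rcases eq_or_lt_of_le (show p + 1 ≤ nxt σ p from h1.2) with heq | hlt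
  · exfalso
    have hmem : p + 1 ∈ minSet σ := by
      rw [show p + 1 = nxt σ p from heq]
      exact h1.1
    exact (mem_Xset_iff σ).1 hX p (by omega)
      ⟨minSet_lrmin hp, minSet_lrmin hmem⟩
  · omega

noncomputable def blocksAux (σ : Perm (Fin n)) : ℕ → ℕ → List ℕ
  | 0, _ => []
  | (fuel + 1), p => if p < n then (nxt σ p - p) :: blocksAux σ fuel (nxt σ p) else []

lemma blocksAux_sum (σ : Perm (Fin n)) :
    ∀ fuel p, p ∈ minSet σ → n - p ≤ fuel →
      (blocksAux σ fuel p).sum = n - p ∧ ∀ x ∈ blocksAux σ fuel p, 0 < x := by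
  intro fuel
  induction fuel with
  | zero =>
    intro p hp hf
    have := minSet_le_n hp
    have hpn : p = n := by omega
    simp [blocksAux, hpn]
  | succ fuel ih =>
    intro p hp hf
    by_cases hpn : p < n
    · have h1 := nxt_spec σ hpn
      have h2 := nxt_le_n σ hpn
      obtain ⟨hsum, hpos⟩ := ih (nxt σ p) h1.1 (by omega)
      simp only [blocksAux, if_pos hpn, List.sum_cons, List.mem_cons]
      constructor
      · omega
      · rintro x (rfl | hx)
        · omega
        · exact hpos x hx
    · have := minSet_le_n hp
      simp only [blocksAux, if_neg hpn, List.sum_nil, List.not_mem_nil]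
      refine ⟨by omega, by simp⟩

lemma blocksAux_two {σ : Perm (Fin n)} (hX : σ ∈ Xset n) :
    ∀ fuel p, p ∈ minSet σ → ∀ x ∈ blocksAux σ fuel p, 2 ≤ x := by
  intro fuel
  induction fuel with
  | zero => intro p hp x hx; simp [blocksAux] at hx
  | succ fuel ih =>
    intro p hp x hx
    by_cases hpn : p < n
    · simp only [blocksAux, if_pos hpn, List.mem_cons] at hx
      rcases hx with rfl | hx
      · have := nxt_gap hX hp hpn
        omega
      · exact ih (nxt σ p) (nxt_spec σ hpn).1 x hx
    · simp [blocksAux, hpn] at hx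

noncomputable def permComp (σ : Perm (Fin n)) : Composition n where
  blocks := blocksAux σ (n + 1) 0
  blocks_pos := by
    intro i hi
    exact (blocksAux_sum σ (n + 1) 0 (zero_mem_minSet σ) (by omega)).2 i hi
  blocks_sum := by
    rw [(blocksAux_sum σ (n + 1) 0 (zero_mem_minSet σ) (by omega)).1]
    omega

lemma permComp_two {σ : Perm (Fin n)} (hX : σ ∈ Xset n) :
    ∀ i ∈ (permComp σ).blocks, 2 ≤ i :=
  fun i hi => blocksAux_two hX (n + 1) 0 (zero_mem_minSet σ) i hi

lemma blocksAux_take (σ : Perm (Fin n)) :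
    ∀ fuel p, p ∈ minSet σ → n - p ≤ fuel →
      ∀ b, b < (blocksAux σ fuel p).length →
        (((blocksAux σ fuel p).take b).sum + p ∈ minSet σ ∧
         ((blocksAux σ fuel p).take b).sum + p < n ∧
         ((blocksAux σ fuel p).take (b + 1)).sum + p =
           nxt σ (((blocksAux σ fuel p).take b).sum + p)) := by
  intro fuel
  induction fuel with
  | zero => intro p hp hf b hb; simp [blocksAux] at hb
  | succ fuel ih =>
    intro p hp hf b hb
    by_cases hpn : p < n
    · have h1 := nxt_spec σ hpn
      have h2 := nxt_le_n σ hpn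
      simp only [blocksAux, if_pos hpn] at hb ⊢
      match b with
      | 0 =>
        simp only [List.take_zero, List.sum_nil, Nat.zero_add, List.take_succ_cons,
          List.take_zero, List.sum_cons, List.sum_nil]
        exact ⟨hp, hpn, by omega⟩
      | b + 1 =>
        simp only [List.length_cons] at hb
        obtain ⟨ih1, ih2, ih3⟩ := ih (nxt σ p) h1.1 (by omega) b (by omega)
        simp only [List.take_succ_cons, List.sum_cons]
        refine ⟨?_, ?_, ?_⟩
        · have : nxt σ p - p + ((blocksAux σ fuel (nxt σ p)).take b).sum + p =
            ((blocksAux σ fuel (nxt σ p)).take b).sum + nxt σ p := by omega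
          rw [this]
          exact ih1
        · omega
        · have e1 : nxt σ p - p + ((blocksAux σ fuel (nxt σ p)).take (b+1)).sum + p =
            ((blocksAux σ fuel (nxt σ p)).take (b+1)).sum + nxt σ p := by omega
          have e2 : nxt σ p - p + ((blocksAux σ fuel (nxt σ p)).take b).sum + p =
            ((blocksAux σ fuel (nxt σ p)).take b).sum + nxt σ p := by omega
          rw [e1, e2, ih3]
    · simp [blocksAux, hpn] at hb

lemma permComp_sizeUpTo (σ : Perm (Fin n)) {b : ℕ} (hb : b < (permComp σ).length) :
    (permComp σ).sizeUpTo b ∈ minSet σ ∧ (permComp σ).sizeUpTo b < n ∧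
      (permComp σ).sizeUpTo (b + 1) = nxt σ ((permComp σ).sizeUpTo b) := by
  have := blocksAux_take σ (n + 1) 0 (zero_mem_minSet σ) (by omega) b hb
  simpa [Composition.sizeUpTo, permComp] using this

/-! ### Counting helpers -/

open Classical in
lemma card_filter_val_le {m : ℕ} (hm : m < n) :
    (Finset.univ.filter fun q : Fin n => (q : ℕ) ≤ m).card = m + 1 := by
  have h : (Finset.univ.filter fun q : Fin n => (q : ℕ) ≤ m) = Finset.Iic ⟨m, hm⟩ := by
    ext q
    simp [Fin.le_def]
  rw [h, Fin.card_Iic]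

open Classical in
lemma card_filter_val_ge {m : ℕ} (hm : 1 ≤ m) (hm2 : m ≤ n) :
    (Finset.univ.filter fun q : Fin n => m ≤ (q : ℕ)).card = n - m := by
  have hkey := Finset.card_filter_add_card_filter_not
    (s := (Finset.univ : Finset (Fin n))) (p := fun q : Fin n => m ≤ (q : ℕ))
  have hneg : (Finset.univ.filter fun q : Fin n => ¬ m ≤ (q : ℕ)) =
      (Finset.univ.filter fun q : Fin n => (q : ℕ) ≤ m - 1) := by
    ext q
    simp only [Finset.mem_filter, Finset.mem_univ, true_and]
    omega
  rw [hneg, card_filter_val_le (by omega)] at hkey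
  rw [Finset.card_univ, Fintype.card_fin] at hkey
  omega

/-! ### The main structure theorem for maximal elements -/

lemma full {σ : Perm (Fin n)} (hmax : IsMaxX n σ) :
    ∀ k p (hp : p < n), n - p ≤ k →
      (¬ IsLRMin σ p → (σ ⟨p, hp⟩ : ℕ) = n - p) ∧
      (IsLRMin σ p → (σ ⟨p, hp⟩ : ℕ) = n - nxt σ p) := by
  intro k
  induction k with
  | zero => intro p hp hk; omega
  | succ k ih =>
    intro p hp hk
    classical
    have hq1 := nxt_spec σ hp
    have hq2 := nxt_le_n σ hp
    -- suffix claim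
    have hsuf : ∀ p' (hp' : p' < n), p < p' →
        (σ ⟨p', hp'⟩ : ℕ) < n - p ∧ (σ ⟨p', hp'⟩ : ℕ) ≠ n - nxt σ p := by
      intro p' hp' hpp'
      obtain ⟨h1, h2⟩ := ih p' hp' (by omega)
      by_cases hmin : IsLRMin σ p'
      · have hval := h2 hmin
        have hmem : p' ∈ minSet σ := mem_minSet.2 (Or.inl ⟨hp', hmin⟩)
        have hnx := nxt_spec σ hp'
        have hnxn := nxt_le_n σ hp'
        have hle : nxt σ p ≤ p' := nxt_le σ hmem hpp'
        exact ⟨by omega, by omega⟩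
      · have hval := h1 hmin
        refine ⟨by omega, fun hcon => ?_⟩
        have hpeq : p' = nxt σ p := by omega
        exact hmin (minSet_lrmin (hpeq ▸ hq1.1))
    -- positions of large values are in the prefix
    have hpos : ∀ y : Fin n, (n - p ≤ (y : ℕ) ∨ (y : ℕ) = n - nxt σ p) →
        ((σ.symm y : Fin n) : ℕ) ≤ p := by
      intro y hor
      by_contra hc
      push_neg at hc
      obtain ⟨h1, h2⟩ := hsuf _ (σ.symm y).2 hc
      rw [Fin.eta, Equiv.apply_symm_apply] at h1 h2
      rcases hor with h | h
      · omega
      · exact h2 h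
    have hnq : n - nxt σ p < n - p := by omega
    have hwq : n - nxt σ p < n := by omega
    set T : Finset (Fin n) := insert ⟨n - nxt σ p, hwq⟩
      (Finset.univ.filter fun y : Fin n => n - p ≤ (y : ℕ)) with hT
    have hTcard : T.card = p + 1 := by
      rw [Finset.card_insert_of_notMem (by
        simp only [Finset.mem_filter, Finset.mem_univ, true_and]
        intro hcon
        have : ((⟨n - nxt σ p, hwq⟩ : Fin n) : ℕ) = n - nxt σ p := rfl
        omega)]
      rcases Nat.eq_zero_or_pos p with rfl | hppos
      · have hempty : (Finset.univ.filter fun y : Fin n => n - 0 ≤ (y : ℕ)) = ∅ := by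
          ext y
          simp only [Finset.mem_filter, Finset.mem_univ, true_and, Finset.notMem_empty,
            iff_false]
          have := y.2
          omega
        rw [hempty]
        simp
      · rw [card_filter_val_ge (by omega) (by omega)]
        omega
    have himg : T.image (fun y => σ.symm y) = Finset.univ.filter fun q : Fin n => (q : ℕ) ≤ p := by
      apply Finset.eq_of_subset_of_card_le
      · intro q hq
        simp only [Finset.mem_image] at hq
        obtain ⟨y, hy, rfl⟩ := hq
        simp only [Finset.mem_filter, Finset.mem_univ, true_and]
        rcases Finset.mem_insert.1 (hT ▸ hy) with rfl | hy'
        · exact hpos _ (Or.inr rfl)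
        · exact hpos _ (Or.inl (Finset.mem_filter.1 hy').2)
      · rw [card_filter_val_le hp, Finset.card_image_of_injective T σ.symm.injective, hTcard]
    set w := (σ ⟨p, hp⟩ : ℕ) with hwdef
    have hwn : w < n := (σ ⟨p, hp⟩).2
    have hpT : σ ⟨p, hp⟩ ∈ T := by
      have hmem : (⟨p, hp⟩ : Fin n) ∈ Finset.univ.filter (fun q : Fin n => (q : ℕ) ≤ p) := by
        simp
      rw [← himg] at hmem
      obtain ⟨y, hy, hyy⟩ := Finset.mem_image.1 hmem
      have hy2 : y = σ ⟨p, hp⟩ := by rw [← hyy, Equiv.apply_symm_apply]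
      rwa [← hy2]
    have hwcases : n - p ≤ w ∨ w = n - nxt σ p := by
      rcases Finset.mem_insert.1 (hT ▸ hpT) with h | h
      · right
        rw [hwdef, h]
      · exact Or.inl (Finset.mem_filter.1 h).2
    -- the value at p cannot exceed n - p
    have hnotgt : ¬ (n - p + 1 ≤ w) := by
      intro hgt
      have hw1 : w - 1 < n := by omega
      have hvlt : w - 1 + 1 < n := by omega
      set r : Fin n := σ.symm ⟨w - 1, hw1⟩ with hrdef
      have hrle : (r : ℕ) ≤ p := hpos _ (Or.inl (by
        show n - p ≤ w - 1
        omega))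
      have hrne : (r : ℕ) ≠ p := by
        intro hcon
        have : r = ⟨p, hp⟩ := Fin.ext hcon
        have : σ ⟨p, hp⟩ = ⟨w - 1, hw1⟩ := by
          rw [← this, hrdef, Equiv.apply_symm_apply]
        have := congrArg Fin.val this
        simp only [] at this
        have hv1 : ((⟨w - 1, hw1⟩ : Fin n) : ℕ) = w - 1 := rfl
        omega
      have hee : (⟨w - 1 + 1, hvlt⟩ : Fin n) = ⟨w, hwn⟩ :=
        Fin.ext (show w - 1 + 1 = w by omega)
      have hsymw : σ.symm ⟨w, hwn⟩ = ⟨p, hp⟩ := by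
        have : σ ⟨p, hp⟩ = ⟨w, hwn⟩ := Fin.ext (by rw [← hwdef])
        rw [← this, Equiv.symm_apply_apply]
      have hab : ((σ.symm ⟨w - 1, Nat.lt_of_succ_lt hvlt⟩ : Fin n) : ℕ) <
          ((σ.symm ⟨w - 1 + 1, hvlt⟩ : Fin n) : ℕ) := by
        rw [hee, hsymw]
        exact lt_of_le_of_ne hrle hrne
      have hasc := maximal_ascent hmax (w - 1) hvlt hab
      set j0 : Fin n := σ.symm ⟨n - nxt σ p, hwq⟩ with hj0def
      have hj0le : (j0 : ℕ) ≤ p := hpos _ (Or.inr rfl)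
      have hj0ne : (j0 : ℕ) ≠ p := by
        intro hcon
        have : j0 = ⟨p, hp⟩ := Fin.ext hcon
        have : σ ⟨p, hp⟩ = ⟨n - nxt σ p, hwq⟩ := by
          rw [← this, hj0def, Equiv.apply_symm_apply]
        have := congrArg Fin.val this
        simp only [] at this
        omega
      have hj0r : j0 ≠ σ.symm ⟨w - 1, Nat.lt_of_succ_lt hvlt⟩ := by
        intro hcon
        rw [hj0def] at hcon
        have := σ.symm.injective hcon
        have := congrArg Fin.val this
        simp only [] at this
        omega
      have hcon := hasc j0 (by
        rw [hee, hsymw]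
        have hv2 : ((⟨p, hp⟩ : Fin n) : ℕ) = p := rfl
        omega) hj0r
      rw [hj0def, Equiv.apply_symm_apply] at hcon
      have hv3 : ((⟨n - nxt σ p, hwq⟩ : Fin n) : ℕ) = n - nxt σ p := rfl
      omega
    rcases (by omega : w = n - p ∨ w = n - nxt σ p) with hw | hw
    · -- not a minimum
      constructor
      · intro _
        exact hw
      · intro hmin
        exfalso
        rw [isLRMin_iff σ hp] at hmin
        set j0 : Fin n := σ.symm ⟨n - nxt σ p, hwq⟩ with hj0def
        have hj0le : (j0 : ℕ) ≤ p := hpos _ (Or.inr rfl)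
        have hj0ne : (j0 : ℕ) ≠ p := by
          intro hcon
          have : j0 = ⟨p, hp⟩ := Fin.ext hcon
          have : σ ⟨p, hp⟩ = ⟨n - nxt σ p, hwq⟩ := by
            rw [← this, hj0def, Equiv.apply_symm_apply]
          have := congrArg Fin.val this
          simp only [] at this
          omega
        have := hmin j0 (by omega)
        rw [hj0def, Equiv.apply_symm_apply] at this
        simp only [] at this
        omega
    · -- a minimum
      have hmin : IsLRMin σ p := by
        rw [isLRMin_iff σ hp]
        intro q hqp
        have hqT : σ q ∈ T := by
          have hq : q ∈ Finset.univ.filter (fun q : Fin n => (q : ℕ) ≤ p) := by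
            simp only [Finset.mem_filter, Finset.mem_univ, true_and]
            omega
          rw [← himg] at hq
          obtain ⟨y, hy, hyy⟩ := Finset.mem_image.1 hq
          have hy2 : y = σ q := by rw [← hyy, Equiv.apply_symm_apply]
          rwa [← hy2]
        rcases Finset.mem_insert.1 (hT ▸ hqT) with h | h
        · exfalso
          have hcon : σ q = σ ⟨p, hp⟩ := by
            rw [h]
            apply Fin.ext
            rw [← hwdef, hw]
          have := σ.injective hcon
          have := congrArg Fin.val this
          simp only [] at this
          omega
        · have := (Finset.mem_filter.1 h).2
          omega
      exact ⟨fun hnm => absurd hmin hnm, fun _ => hw⟩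

lemma maxX_eq_wIval {σ : Perm (Fin n)} (hmax : IsMaxX n σ) (p : Fin n) :
    (σ p : ℕ) = wIval (permComp σ) p := by
  obtain ⟨hm, hlt, hnx⟩ := permComp_sizeUpTo σ (b := ((permComp σ).index p : ℕ))
    ((permComp σ).index p).2
  have h1 := (permComp σ).sizeUpTo_index_le p
  have h2 := (permComp σ).lt_sizeUpTo_index_succ p
  rw [Fin.val_succ] at h2
  have hful := full hmax n (p : ℕ) p.2 (by omega)
  rw [Fin.eta] at hful
  by_cases hps : (p : ℕ) = (permComp σ).sizeUpTo ((permComp σ).index p : ℕ)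
  · have hmin : IsLRMin σ (p : ℕ) := by
      rw [hps]
      exact minSet_lrmin hm
    rw [hful.2 hmin, wIval_start (permComp σ) hps]
    congr 1
    rw [hnx, ← hps]
  · have hnmin : ¬ IsLRMin σ (p : ℕ) := by
      intro hmin
      have hpm : (p : ℕ) ∈ minSet σ := mem_minSet.2 (Or.inl ⟨p.2, hmin⟩)
      have := nxt_le σ hpm (lt_of_le_of_ne h1 (fun hh => hps hh.symm))
      rw [← hnx] at this
      omega
    rw [hful.1 hnmin, wIval_nonstart (permComp σ) hps]

lemma sizeUpTo_succ_le (d d' : Composition n)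
    (hst : ∀ p : Fin n, (p : ℕ) = d'.sizeUpTo ((d'.index p : Fin d'.length) : ℕ) →
      (p : ℕ) = d.sizeUpTo ((d.index p : Fin d.length) : ℕ))
    {e : ℕ} (he : e < d.length) (he' : e < d'.length)
    (hee : d.sizeUpTo e = d'.sizeUpTo e) :
    d.sizeUpTo (e + 1) ≤ d'.sizeUpTo (e + 1) := by
  rcases eq_or_lt_of_le (d'.sizeUpTo_le (e + 1)) with heq | hltn
  · rw [heq]
    exact d.sizeUpTo_le (e + 1)
  · have hlen' : e + 1 < d'.length := lt_length_of_sizeUpTo_lt d' hltn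
    set t : Fin n := ⟨d'.sizeUpTo (e + 1), hltn⟩ with htdef
    have hidx' : d'.index t = ⟨e + 1, hlen'⟩ := by
      apply index_unique
      · exact le_rfl
      · exact d'.sizeUpTo_strict_mono hlen'
    have hstart' : (t : ℕ) = d'.sizeUpTo ((d'.index t : Fin d'.length) : ℕ) := by
      rw [hidx']
    have hstart := hst t hstart'
    set f := d.index t with hfdef
    have hef : e < (f : ℕ) := by
      by_contra hc
      have hmono : d.sizeUpTo (f : ℕ) ≤ d.sizeUpTo e := d.monotone_sizeUpTo (by omega)
      have hts : d'.sizeUpTo e < d'.sizeUpTo (e + 1) := d'.sizeUpTo_strict_mono he'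
      have : (t : ℕ) = d'.sizeUpTo (e + 1) := rfl
      omega
    calc d.sizeUpTo (e + 1) ≤ d.sizeUpTo (f : ℕ) := d.monotone_sizeUpTo (by omega)
    _ = (t : ℕ) := hstart.symm
    _ = d'.sizeUpTo (e + 1) := rfl

noncomputable def wPerm (c : Composition n) : Perm (Fin n) :=
  Equiv.ofBijective (fun p => (⟨wIval c p, wIval_lt c p⟩ : Fin n))
    (Finite.injective_iff_bijective.1 fun p q hpq => wIval_inj c (by
      have := congrArg Fin.val hpq
      simpa using this))

lemma wPerm_apply (c : Composition n) (p : Fin n) : ((wPerm c p : Fin n) : ℕ) = wIval c p := rfl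

lemma comp_unique {c c' : Composition n}
    (h : ∀ p : Fin n, wIval c p = wIval c' p) : c = c' := by
  have hst : ∀ p : Fin n, ((p : ℕ) = c.sizeUpTo ((c.index p : Fin c.length) : ℕ) ↔
      (p : ℕ) = c'.sizeUpTo ((c'.index p : Fin c'.length) : ℕ)) := by
    intro p
    have e1 := lrmin_wIval (c := c) (σ := wPerm c) (fun q => rfl) p
    have e2 := lrmin_wIval (c := c') (σ := wPerm c) (fun q => by rw [wPerm_apply, h q]) p
    rw [← e1, ← e2]
  have hSeq : ∀ e, e ≤ c.length → e ≤ c'.length → c.sizeUpTo e = c'.sizeUpTo e := by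
    intro e
    induction e with
    | zero => intro _ _; rw [Composition.sizeUpTo_zero, Composition.sizeUpTo_zero]
    | succ e ih =>
      intro he he'
      have hee := ih (by omega) (by omega)
      exact le_antisymm
        (sizeUpTo_succ_le c c' (fun p hp => (hst p).2 hp) (by omega) (by omega) hee)
        (sizeUpTo_succ_le c' c (fun p hp => (hst p).1 hp) (by omega) (by omega) hee.symm)
  have hlen : c.length = c'.length := by
    by_contra hne
    rcases lt_or_gt_of_ne hne with hlt | hlt
    · have := hSeq c.length le_rfl (by omega)
      rw [c.sizeUpTo_length] at this
      have := sizeUpTo_lt_of_lt_length c' hlt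
      omega
    · have := hSeq c'.length (by omega) le_rfl
      rw [c'.sizeUpTo_length] at this
      have := sizeUpTo_lt_of_lt_length c hlt
      omega
  apply Composition.ext
  apply List.ext_getElem
  · rw [c.blocks_length, c'.blocks_length, hlen]
  · intro i hi1 hi2
    have hi1' : i < c.length := by rwa [c.blocks_length] at hi1
    have hi2' : i < c'.length := by rwa [c'.blocks_length] at hi2
    have g1 : c.sizeUpTo (i + 1) = c.sizeUpTo i + c.blocks[i] := c.sizeUpTo_succ hi1'
    have g2 : c'.sizeUpTo (i + 1) = c'.sizeUpTo i + c'.blocks[i] := c'.sizeUpTo_succ hi2' 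
    have e1 := hSeq i (by omega) (by omega)
    have e2 := hSeq (i + 1) (by omega) (by omega)
    omega

/-- The maximal elements of the left weak order ideal `X_n` are exactly the shifted
concatenations `w_I` over compositions `I` of `n` with no part equal to `1`; in particular
their number is the number of compositions of `n` into parts `≥ 2`. -/
theorem stmt_11 (n : ℕ) :
    (∀ σ : Perm (Fin n), IsMaxX n σ ↔
      ∃ c : Composition n, (∀ i ∈ c.blocks, 2 ≤ i) ∧ ∀ p : Fin n, (σ p : ℕ) = wIval c p) ∧
    Nat.card {σ : Perm (Fin n) // IsMaxX n σ} =
      Nat.card {c : Composition n // ∀ i ∈ c.blocks, 2 ≤ i} := by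
  have hiff : ∀ σ : Perm (Fin n), IsMaxX n σ ↔
      ∃ c : Composition n, (∀ i ∈ c.blocks, 2 ≤ i) ∧ ∀ p : Fin n, (σ p : ℕ) = wIval c p := by
    intro σ
    constructor
    · intro hmax
      exact ⟨permComp σ, permComp_two hmax.1, fun p => maxX_eq_wIval hmax p⟩
    · rintro ⟨c, hc2, hval⟩
      exact maxX_wIval hval hc2
  refine ⟨hiff, ?_⟩
  have hbij : Function.Bijective
      (fun s : {σ : Perm (Fin n) // IsMaxX n σ} =>
        (⟨permComp s.1, permComp_two s.2.1⟩ : {c : Composition n // ∀ i ∈ c.blocks, 2 ≤ i})) := by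
    constructor
    · rintro ⟨σ, hσ⟩ ⟨τ, hτ⟩ hst
      simp only [Subtype.mk.injEq] at hst ⊢
      apply Equiv.ext
      intro p
      apply Fin.ext
      rw [maxX_eq_wIval hσ p, maxX_eq_wIval hτ p, hst]
    · rintro ⟨c, hc⟩
      have hmax : IsMaxX n (wPerm c) := maxX_wIval (wPerm_apply c) hc
      refine ⟨⟨wPerm c, hmax⟩, ?_⟩
      simp only [Subtype.mk.injEq]
      apply comp_unique
      intro p
      rw [← maxX_eq_wIval hmax p, wPerm_apply]
  exact Nat.card_eq_of_bijective _ hbij
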